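/- For every integer q ≥ 2, the equation q^(x−1) = (x+1)(x/2+1)⋯(x/(q−1)+1) (product over i = 1, …, q−1 of (x/i + 1)) has a unique real solution x₀ in [1, ∞). Moreover, x₀ > 1, and if q > 3 then x₀ < q. -/

import Mathlib

open Finset in
private lemma stmt8_telescope (n : ℕ) :
    ∑ i ∈ Icc 1 n, (Real.log ((i : ℝ) + 1) - Real.log (i : ℝ)) = Real.log ((n : ℝ) + 1) := by
  rw [← Finset.Ico_add_one_right_eq_Icc, Finset.sum_Ico_eq_sum_range]
  have h := Finset.sum_range_sub (fun j : ℕ => Real.log ((j : ℝ) + 1)) n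
  simp only [Nat.cast_zero, zero_add, Real.log_one, sub_zero] at h
  rw [← h]
  apply Finset.sum_congr rfl
  intro k _
  push_cast
  ring_nf

open Finset in
private lemma stmt8_sum_inv_lt (n : ℕ) (hn : 1 ≤ n) :
    ∑ i ∈ Icc 1 n, (1 : ℝ) / (1 + (i : ℝ)) < Real.log ((n : ℝ) + 1) := by
  rw [← stmt8_telescope n]
  apply Finset.sum_lt_sum_of_nonempty
  · exact ⟨1, by simpa using hn⟩
  · intro i hi
    have hi1 : 1 ≤ i := (Finset.mem_Icc.mp hi).1
    have hipos : (0 : ℝ) < (i : ℝ) := by exact_mod_cast hi1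
    have hipos1 : (0 : ℝ) < 1 + (i : ℝ) := by linarith
    rw [← Real.log_div (by linarith) (ne_of_gt hipos)]
    rw [Real.lt_log_iff_exp_lt (by positivity)]
    set s : ℝ := 1 / (1 + (i : ℝ)) with hs
    have hs0 : 0 < s := by positivity
    have h := Real.add_one_lt_exp (x := -s) (by intro hc; rw [neg_eq_zero] at hc; linarith)
    rw [Real.exp_neg] at h
    have hE : 0 < Real.exp s := Real.exp_pos s
    have h3 : (1 - s) * Real.exp s < 1 := by
      have h2 := mul_lt_mul_of_pos_right h hE
      rw [inv_mul_cancel₀ (ne_of_gt hE)] at h2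
      nlinarith [h2]
    have h4 : (1 - s) * Real.exp s * (1 + (i : ℝ)) < 1 * (1 + (i : ℝ)) :=
      mul_lt_mul_of_pos_right h3 hipos1
    have h5 : (1 - s) * Real.exp s * (1 + (i : ℝ)) = Real.exp s * i := by
      rw [hs]; field_simp; ring
    rw [lt_div_iff₀ hipos]
    calc Real.exp s * i = (1 - s) * Real.exp s * (1 + (i : ℝ)) := h5.symm
      _ < 1 * (1 + (i : ℝ)) := h4
      _ = i + 1 := by ring

open Finset Nat in
private lemma stmt8_prod_eq_choose (q : ℕ) (hq : 2 ≤ q) :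
    ∏ i ∈ Icc 1 (q - 1), ((q : ℝ) / (i : ℝ) + 1) = ((2 * q - 1).choose (q - 1) : ℝ) := by
  have hN : (∏ i ∈ Icc 1 (q - 1), (q + i)) = (2 * q - 1).choose (q - 1) * (q - 1)! := by
    have h1 : (∏ i ∈ Ico 1 (q + 1), i) * ∏ i ∈ Ico (q + 1) (2 * q), i
        = ∏ i ∈ Ico 1 (2 * q), i :=
      Finset.prod_Ico_consecutive _ (by omega) (by omega)
    have h2 : (∏ i ∈ Ico 1 (q + 1), i) = q ! := Finset.prod_Ico_id_eq_factorial q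
    have h3 : (∏ i ∈ Ico 1 (2 * q), i) = (2 * q - 1)! := by
      have he : 2 * q = (2 * q - 1) + 1 := by omega
      rw [he]; exact Finset.prod_Ico_id_eq_factorial (2 * q - 1)
    have h4 : (∏ i ∈ Ico (q + 1) (2 * q), i) = ∏ i ∈ Icc 1 (q - 1), (q + i) := by
      rw [← Finset.Ico_add_one_right_eq_Icc, Finset.prod_Ico_eq_prod_range, Finset.prod_Ico_eq_prod_range]
      have he : q - 1 + 1 - 1 = 2 * q - (q + 1) := by omega
      rw [he]
      exact (Finset.prod_congr rfl (fun k _ => by omega)).symm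
    have h5 := Nat.choose_mul_factorial_mul_factorial (show q - 1 ≤ 2 * q - 1 by omega)
    have h6 : 2 * q - 1 - (q - 1) = q := by omega
    rw [h6] at h5
    have h7 : (∏ i ∈ Icc 1 (q - 1), (q + i)) * q !
        = (2 * q - 1).choose (q - 1) * (q - 1)! * q ! := by
      rw [h5, ← h3, ← h1, h2, ← h4]; ring
    exact Nat.eq_of_mul_eq_mul_right (Nat.factorial_pos q) h7
  have hfrac : ∀ i ∈ Icc 1 (q - 1), (q : ℝ) / (i : ℝ) + 1 = ((q + i : ℕ) : ℝ) / ((i : ℕ) : ℝ) := by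
    intro i hi
    have hi1 : 1 ≤ i := (Finset.mem_Icc.mp hi).1
    have hipos : (0 : ℝ) < (i : ℝ) := by exact_mod_cast hi1
    push_cast
    field_simp
  rw [Finset.prod_congr rfl hfrac, Finset.prod_div_distrib]
  rw [← Nat.cast_prod, ← Nat.cast_prod, hN]
  have hfac : (∏ i ∈ Icc 1 (q - 1), i) = (q - 1)! := by
    rw [← Finset.Ico_add_one_right_eq_Icc]; exact Finset.prod_Ico_id_eq_factorial (q - 1)
  rw [hfac]
  have hne : ((q - 1)! : ℝ) ≠ 0 := by positivity
  push_cast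
  field_simp

private lemma stmt8_choose_lt (q : ℕ) (hq : 4 ≤ q) : (2 * q - 1).choose (q - 1) < q ^ (q - 1) := by
  have h := Nat.choose_middle_le_pow (q - 1)
  have he : 2 * (q - 1) + 1 = 2 * q - 1 := by omega
  rw [he] at h
  rcases eq_or_lt_of_le hq with h4 | h5
  · subst h4; decide
  · calc (2 * q - 1).choose (q - 1) ≤ 4 ^ (q - 1) := h
      _ < q ^ (q - 1) := Nat.pow_lt_pow_left (by omega) (by omega)

open Finset in
theorem stmt_8 (q : ℕ) (hq : 2 ≤ q) :
    ∃ x₀ : ℝ,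
      (1 ≤ x₀ ∧ (q : ℝ) ^ (x₀ - 1) = ∏ i ∈ Icc 1 (q - 1), (x₀ / (i : ℝ) + 1)) ∧
      (∀ x : ℝ, 1 ≤ x → (q : ℝ) ^ (x - 1) = ∏ i ∈ Icc 1 (q - 1), (x / (i : ℝ) + 1) → x = x₀) ∧
      1 < x₀ ∧ (3 < q → x₀ < (q : ℝ)) := by
  have hq2 : (2 : ℝ) ≤ (q : ℝ) := by exact_mod_cast hq
  have hq1 : (1 : ℝ) < (q : ℝ) := by linarith
  have hq0 : (0 : ℝ) < (q : ℝ) := by linarith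
  have hcastq : ((q - 1 : ℕ) : ℝ) = (q : ℝ) - 1 := by
    have : (1 : ℕ) ≤ q := by omega
    push_cast [this]; ring
  set L : ℝ := Real.log q with hLdef
  have hL : 0 < L := Real.log_pos hq1
  set f : ℝ → ℝ := fun x => (x - 1) * L - ∑ i ∈ Icc 1 (q - 1), Real.log (x / (i : ℝ) + 1)
    with hf
  -- positivity of factors
  have hpos : ∀ x : ℝ, 0 ≤ x → ∀ i ∈ Icc 1 (q - 1), (0 : ℝ) < x / (i : ℝ) + 1 := by
    intro x hx i hi
    have hi1 : 1 ≤ i := (Finset.mem_Icc.mp hi).1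
    have hipos : (0 : ℝ) < (i : ℝ) := by exact_mod_cast hi1
    have : 0 ≤ x / (i : ℝ) := div_nonneg hx hipos.le
    linarith
  -- derivative
  have hderiv : ∀ x : ℝ, 0 < x →
      HasDerivAt f (L - ∑ i ∈ Icc 1 (q - 1), 1 / (x + (i : ℝ))) x := by
    intro x hx
    have h1 : HasDerivAt (fun y : ℝ => (y - 1) * L) L x := by
      simpa using ((hasDerivAt_id x).sub_const 1).mul_const L
    have h2 : HasDerivAt (fun y : ℝ => ∑ i ∈ Icc 1 (q - 1), Real.log (y / (i : ℝ) + 1))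
        (∑ i ∈ Icc 1 (q - 1), 1 / (x + (i : ℝ))) x := by
      apply HasDerivAt.fun_sum
      intro i hi
      have hi1 : 1 ≤ i := (Finset.mem_Icc.mp hi).1
      have hipos : (0 : ℝ) < (i : ℝ) := by exact_mod_cast hi1
      have hne : x / (i : ℝ) + 1 ≠ 0 := ne_of_gt (hpos x hx.le i hi)
      have h3 : HasDerivAt (fun y : ℝ => y / (i : ℝ) + 1) (1 / (i : ℝ)) x := by
        simpa using ((hasDerivAt_id x).div_const (i : ℝ)).add_const 1
      have h4 := h3.log hne
      refine h4.congr_deriv (Eq.symm ?_)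
      rw [eq_div_iff hne]
      have hxi : x + (i : ℝ) ≠ 0 := by positivity
      field_simp
    rw [hf]
    exact h1.sub h2
  have hc : ∀ x : ℝ, 0 < x → ContinuousAt f x := fun x hx => (hderiv x hx).continuousAt
  -- strict monotonicity on [1, ∞)
  have hmono : StrictMonoOn f (Set.Ici 1) := by
    apply strictMonoOn_of_deriv_pos (convex_Ici 1)
    · intro x hx
      exact (hc x (by linarith [Set.mem_Ici.mp hx])).continuousWithinAt
    · intro x hx
      rw [interior_Ici] at hx
      have hx1 : (1 : ℝ) < x := hx
      rw [(hderiv x (by linarith)).deriv]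
      have hb : ∑ i ∈ Icc 1 (q - 1), 1 / (x + (i : ℝ))
          ≤ ∑ i ∈ Icc 1 (q - 1), (1 : ℝ) / (1 + (i : ℝ)) := by
        apply Finset.sum_le_sum
        intro i hi
        have hi1 : 1 ≤ i := (Finset.mem_Icc.mp hi).1
        have hipos : (0 : ℝ) < (i : ℝ) := by exact_mod_cast hi1
        exact one_div_le_one_div_of_le (by linarith) (by linarith)
      have hkey := stmt8_sum_inv_lt (q - 1) (by omega)
      rw [hcastq] at hkey
      have : (q : ℝ) - 1 + 1 = (q : ℝ) := by ring
      rw [this] at hkey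
      linarith
  -- value at 1
  have hf1 : f 1 = -L := by
    have hsum : ∑ i ∈ Icc 1 (q - 1), Real.log ((1 : ℝ) / (i : ℝ) + 1)
        = ∑ i ∈ Icc 1 (q - 1), (Real.log ((i : ℝ) + 1) - Real.log (i : ℝ)) := by
      apply Finset.sum_congr rfl
      intro i hi
      have hi1 : 1 ≤ i := (Finset.mem_Icc.mp hi).1
      have hipos : (0 : ℝ) < (i : ℝ) := by exact_mod_cast hi1
      rw [← Real.log_div (by linarith) (ne_of_gt hipos)]
      congr 1
      field_simp
      ring
    rw [hf]
    simp only [hsum, stmt8_telescope, hcastq]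
    have : (q : ℝ) - 1 + 1 = (q : ℝ) := by ring
    rw [this, ← hLdef]
    ring
  -- value at 3q is positive
  have hcard : ((Icc 1 (q - 1)).card : ℝ) = (q : ℝ) - 1 := by
    rw [Nat.card_Icc]
    have : q - 1 + 1 - 1 = q - 1 := by omega
    rw [this, hcastq]
  have hf3q : 0 < f (3 * q) := by
    have hsum : ∑ i ∈ Icc 1 (q - 1), Real.log (3 * (q : ℝ) / (i : ℝ) + 1)
        ≤ ((q : ℝ) - 1) * (3 * L) := by
      have hterm : ∀ i ∈ Icc 1 (q - 1), Real.log (3 * (q : ℝ) / (i : ℝ) + 1) ≤ 3 * L := by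
        intro i hi
        have hi1 : 1 ≤ i := (Finset.mem_Icc.mp hi).1
        have hipos : (1 : ℝ) ≤ (i : ℝ) := by exact_mod_cast hi1
        have hd : 3 * (q : ℝ) / (i : ℝ) ≤ 3 * (q : ℝ) := div_le_self (by linarith) hipos
        have h31 : 3 * (q : ℝ) + 1 ≤ (q : ℝ) ^ 3 := by
          have ha : (4 : ℝ) ≤ (q : ℝ) ^ 2 := by nlinarith
          have hb : (q : ℝ) * 4 ≤ (q : ℝ) * (q : ℝ) ^ 2 := mul_le_mul_of_nonneg_left ha hq0.le
          nlinarith [hb]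
        calc Real.log (3 * (q : ℝ) / (i : ℝ) + 1) ≤ Real.log ((q : ℝ) ^ 3) := by
              apply Real.log_le_log (by positivity) (by linarith)
          _ = 3 * L := by rw [Real.log_pow]; push_cast; ring
      calc ∑ i ∈ Icc 1 (q - 1), Real.log (3 * (q : ℝ) / (i : ℝ) + 1)
          ≤ ∑ _i ∈ Icc 1 (q - 1), 3 * L := Finset.sum_le_sum hterm
        _ = ((Icc 1 (q - 1)).card : ℝ) * (3 * L) := by rw [Finset.sum_const, nsmul_eq_mul]
        _ = ((q : ℝ) - 1) * (3 * L) := by rw [hcard]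
    have : f (3 * q) = (3 * (q : ℝ) - 1) * L
        - ∑ i ∈ Icc 1 (q - 1), Real.log (3 * (q : ℝ) / (i : ℝ) + 1) := by
      rw [hf]
    rw [this]
    nlinarith [hsum, hL]
  -- IVT
  have h13 : (1 : ℝ) ≤ 3 * q := by linarith
  have hconIcc : ContinuousOn f (Set.Icc 1 (3 * q)) := fun x hx =>
    (hc x (by linarith [hx.1])).continuousWithinAt
  have hmem : (0 : ℝ) ∈ Set.Icc (f 1) (f (3 * (q : ℝ))) := by
    constructor
    · rw [hf1]; linarith
    · linarith
  obtain ⟨x₀, hx₀mem, hx₀⟩ := intermediate_value_Icc h13 hconIcc hmem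
  have hx₀1 : (1 : ℝ) ≤ x₀ := hx₀mem.1
  -- equivalence of the equation with f x = 0
  have heqv : ∀ x : ℝ, 1 ≤ x →
      (((q : ℝ) ^ (x - 1) = ∏ i ∈ Icc 1 (q - 1), (x / (i : ℝ) + 1)) ↔ f x = 0) := by
    intro x hx
    have h1 : (q : ℝ) ^ (x - 1) = Real.exp ((x - 1) * L) := by
      rw [Real.rpow_def_of_pos hq0, hLdef, mul_comm]
    have h2 : ∏ i ∈ Icc 1 (q - 1), (x / (i : ℝ) + 1)
        = Real.exp (∑ i ∈ Icc 1 (q - 1), Real.log (x / (i : ℝ) + 1)) := by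
      rw [Real.exp_sum]
      exact Finset.prod_congr rfl (fun i hi => (Real.exp_log (hpos x (by linarith) i hi)).symm)
    rw [h1, h2, Real.exp_eq_exp, hf]
    constructor
    · intro h; simp only [h]; ring
    · intro h
      have := sub_eq_zero.mp h
      linarith [this]
  refine ⟨x₀, ⟨hx₀1, (heqv x₀ hx₀1).mpr hx₀⟩, ?_, ?_, ?_⟩
  · -- uniqueness
    intro x hx heq
    exact hmono.injOn (Set.mem_Ici.mpr hx) (Set.mem_Ici.mpr hx₀1)
      (((heqv x hx).mp heq).trans hx₀.symm)
  · -- 1 < x₀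
    rcases lt_or_eq_of_le hx₀1 with h | h
    · exact h
    · exfalso
      rw [← h] at hx₀
      rw [hf1] at hx₀
      linarith
  · -- q > 3 → x₀ < q
    intro h3q
    have hq4 : 4 ≤ q := h3q
    have hfq : 0 < f (q : ℝ) := by
      have hch := stmt8_choose_lt q hq4
      have hprod := stmt8_prod_eq_choose q hq
      have hlogsum : ∑ i ∈ Icc 1 (q - 1), Real.log ((q : ℝ) / (i : ℝ) + 1)
          = Real.log (((2 * q - 1).choose (q - 1) : ℕ) : ℝ) := by
        rw [← Real.log_prod (fun i hi => ne_of_gt (hpos (q : ℝ) (by linarith) i hi)), hprod]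
      have hchpos : (0 : ℝ) < (((2 * q - 1).choose (q - 1) : ℕ) : ℝ) := by
        exact_mod_cast Nat.choose_pos (show q - 1 ≤ 2 * q - 1 by omega)
      have hlt : (((2 * q - 1).choose (q - 1) : ℕ) : ℝ) < ((q : ℝ)) ^ (q - 1 : ℕ) := by
        exact_mod_cast hch
      have hloglt := Real.log_lt_log hchpos hlt
      rw [Real.log_pow, hcastq] at hloglt
      have : f (q : ℝ) = ((q : ℝ) - 1) * L
          - ∑ i ∈ Icc 1 (q - 1), Real.log ((q : ℝ) / (i : ℝ) + 1) := by rw [hf]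
      rw [this, hlogsum]
      rw [hLdef]
      linarith
    by_contra hcon
    push_neg at hcon
    have hle := hmono.monotoneOn (Set.mem_Ici.mpr (by linarith : (1 : ℝ) ≤ (q : ℝ)))
      (Set.mem_Ici.mpr hx₀1) hcon
    rw [hx₀] at hle
    linarith
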